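/- Let G=(V,E) be a digraph on n vertices, r ≥ 0 an integer, and ε ∈ (0,1] a real number. Let (A,B,C) be a partition of V with A and B nonempty such that neither A nor B is r-reachable. Let W ⊆ V be a set with |W| ≤ εn/4, and let (A',B',C') be a partition of V such that for every vertex v ∉ W: (i) if v ∈ A then v ∈ A'; (ii) if v ∈ B then v ∈ B'; (iii) if v ∈ A' then |N_in(v) ∩ (B∪C)| < r + εn/2; and (iv) if v ∈ B' then |N_in(v) ∩ (A∪C)| < r + εn/2. Then the set Γ_{A'} := {v ∈ A' : |N_in(v) ∩ (V\A')| ≥ r + 3εn/4} satisfies Γ_{A'} ⊆ W, hence |Γ_{A'}| ≤ εn/4; and symmetrically Γ_{B'} := {v ∈ B' : |N_in(v) ∩ (V\B')| ≥ r + 3εn/4} satisfies Γ_{B'} ⊆ W, hence |Γ_{B'}| ≤ εn/4. -/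
import Mathlib


/-- The set of in-neighbors of `v`: vertices `u` with an edge directed from `u` to `v`. -/
def inNbrsSet {V : Type*} (Adj : V → V → Prop) (v : V) : Set V :=
  {u | Adj u v}

/-- A nonempty set `S` is `r`-reachable if some `v ∈ S` has at least `r` in-neighbors
outside `S`. -/
def RReachableSet {V : Type*} (Adj : V → V → Prop) (r : ℕ) (S : Set V) : Prop :=
  ∃ v ∈ S, r ≤ (inNbrsSet Adj v \ S).ncard

/-- `Gamma Adj r ε A'` is the set of vertices of `A'` having at least `r + 3εn/4`
in-neighbors outside `A'`. -/
def Gamma {V : Type*} [Fintype V] (Adj : V → V → Prop) (r : ℕ) (ε : ℝ) (A' : Set V) :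
    Set V :=
  {v ∈ A' | (r : ℝ) + 3 * ε * (Fintype.card V) / 4 ≤ ((inNbrsSet Adj v \ A').ncard : ℝ)}

lemma gamma_sub_W {V : Type*} [Fintype V] (Adj : V → V → Prop) (r : ℕ) (ε : ℝ)
    (A D W A' : Set V)
    (hcover : A ∪ D = Set.univ)
    (hW : (W.ncard : ℝ) ≤ ε * (Fintype.card V) / 4)
    (h1 : ∀ v ∉ W, v ∈ A → v ∈ A')
    (h3 : ∀ v ∉ W, v ∈ A' →
      (((inNbrsSet Adj v ∩ D).ncard : ℝ) < (r : ℝ) + ε * (Fintype.card V) / 2)) :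
    Gamma Adj r ε A' ⊆ W := by
  intro v hv
  by_contra hvW
  obtain ⟨hvA', hge⟩ := hv
  have hlt := h3 v hvW hvA'
  have hsub : inNbrsSet Adj v \ A' ⊆ (inNbrsSet Adj v ∩ D) ∪ W := by
    intro u hu
    obtain ⟨hun, hunA'⟩ := hu
    by_cases huD : u ∈ D
    · exact Or.inl ⟨hun, huD⟩
    · have huA : u ∈ A := by
        rcases (hcover ▸ Set.mem_univ u : u ∈ A ∪ D) with h | h
        · exact h
        · exact absurd h huD
      by_cases huW : u ∈ W
      · exact Or.inr huW
      · exact absurd (h1 u huW huA) hunA'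
  have h5 : (inNbrsSet Adj v \ A').ncard ≤ (inNbrsSet Adj v ∩ D).ncard + W.ncard :=
    le_trans (Set.ncard_le_ncard hsub (Set.toFinite _)) (Set.ncard_union_le _ _)
  have h6 : ((inNbrsSet Adj v \ A').ncard : ℝ) ≤
      ((inNbrsSet Adj v ∩ D).ncard : ℝ) + (W.ncard : ℝ) := by exact_mod_cast h5
  linarith

theorem stmt9 {V : Type*} [Fintype V]
    (Adj : V → V → Prop)
    (hloopless : ∀ v, ¬ Adj v v)
    (r : ℕ) (ε : ℝ) (hε : 0 < ε) (hε1 : ε ≤ 1)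
    (A B C : Set V)
    (hAB : Disjoint A B) (hAC : Disjoint A C) (hBC : Disjoint B C)
    (hcover : A ∪ B ∪ C = Set.univ)
    (hA : A.Nonempty) (hB : B.Nonempty)
    (hAnr : ¬ RReachableSet Adj r A) (hBnr : ¬ RReachableSet Adj r B)
    (W : Set V) (hW : (W.ncard : ℝ) ≤ ε * (Fintype.card V) / 4)
    (A' B' C' : Set V)
    (hAB' : Disjoint A' B') (hAC' : Disjoint A' C') (hBC' : Disjoint B' C')
    (hcover' : A' ∪ B' ∪ C' = Set.univ)
    (h1 : ∀ v ∉ W, v ∈ A → v ∈ A')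
    (h2 : ∀ v ∉ W, v ∈ B → v ∈ B')
    (h3 : ∀ v ∉ W, v ∈ A' →
      (((inNbrsSet Adj v ∩ (B ∪ C)).ncard : ℝ) < (r : ℝ) + ε * (Fintype.card V) / 2))
    (h4 : ∀ v ∉ W, v ∈ B' →
      (((inNbrsSet Adj v ∩ (A ∪ C)).ncard : ℝ) < (r : ℝ) + ε * (Fintype.card V) / 2)) :
    (Gamma Adj r ε A' ⊆ W ∧
      ((Gamma Adj r ε A').ncard : ℝ) ≤ ε * (Fintype.card V) / 4) ∧
    (Gamma Adj r ε B' ⊆ W ∧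
      ((Gamma Adj r ε B').ncard : ℝ) ≤ ε * (Fintype.card V) / 4) := by
  have hcA : A ∪ (B ∪ C) = Set.univ := by rw [← Set.union_assoc]; exact hcover
  have hcB : B ∪ (A ∪ C) = Set.univ := by rw [← hcover]; ac_rfl
  have hGA := gamma_sub_W Adj r ε A (B ∪ C) W A' hcA hW h1 h3
  have hGB := gamma_sub_W Adj r ε B (A ∪ C) W B' hcB hW h2 h4
  refine ⟨⟨hGA, le_trans ?_ hW⟩, ⟨hGB, le_trans ?_ hW⟩⟩ <;>
    exact_mod_cast Nat.cast_le.mpr (Set.ncard_le_ncard (by assumption) (Set.toFinite _))
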